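/- arXiv:1707.08319 — 2 statements merged into one kernel-verified Lean document; each statement's English description precedes it below -/
import Mathlib

section
/- Let n ≥ 2 and define φ(t,x) = ∫_{S^{n-1}} e^{x·ω − t} dω for (t,x) ∈ ℝ × ℝⁿ. Then there exist constants 0 < c ≤ C such that c (1+|x|)^{-(n-1)/2} e^{|x|−t} ≤ φ(t,x) ≤ C (1+|x|)^{-(n-1)/2} e^{|x|−t} for all t ∈ ℝ and x ∈ ℝⁿ. -/
open Real MeasureTheory
open Metric Set Pointwise NNReal ENNReal

/-- `φ(t,x) = ∫_{S^{n-1}} e^{x·ω − t} dω`, where the sphere carries the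
`(n-1)`-dimensional Hausdorff (surface) measure. -/
noncomputable def phiFn (n : ℕ) (t : ℝ) (x : EuclideanSpace ℝ (Fin n)) : ℝ :=
  ∫ ω in Metric.sphere (0 : EuclideanSpace ℝ (Fin n)) 1,
    Real.exp ((inner ℝ x ω : ℝ) - t) ∂(μH[(n : ℝ) - 1])

lemma ballF (m : ℕ) : ∃ b : ℝ, 0 < b ∧ ∀ ρ : ℝ, 0 < ρ →
    μH[(m:ℝ)] (Metric.closedBall (0 : EuclideanSpace ℝ (Fin m)) ρ)
      = ENNReal.ofReal (b * ρ ^ (m:ℝ)) := by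
  have hfr : (Module.finrank ℝ (EuclideanSpace ℝ (Fin m)) : ℝ) = (m : ℝ) := by
    rw [finrank_euclideanSpace_fin]
  have hHaar : (μH[(m:ℝ)] : Measure (EuclideanSpace ℝ (Fin m))).IsAddHaarMeasure := by
    rw [← hfr]; exact isAddHaarMeasure_hausdorffMeasure
  set ν : Measure (EuclideanSpace ℝ (Fin m)) := μH[(m:ℝ)] with hν
  have h0 : 0 < ν (closedBall 0 1) := measure_closedBall_pos ν _ one_pos
  have h1 : ν (closedBall 0 1) < ⊤ := (isCompact_closedBall _ _).measure_lt_top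
  refine ⟨(ν (closedBall 0 1)).toReal, ENNReal.toReal_pos h0.ne' h1.ne, fun ρ hρ => ?_⟩
  have hsmul : (ρ : ℝ) • (closedBall (0 : EuclideanSpace ℝ (Fin m)) 1) = closedBall 0 ρ := by
    rw [_root_.smul_closedBall _ _ zero_le_one, smul_zero, Real.norm_eq_abs, abs_of_pos hρ, mul_one]
  rw [← hsmul, Measure.hausdorffMeasure_smul₀ (𝕜 := ℝ) ((by positivity : (0:ℝ) ≤ (m:ℝ))) hρ.ne' _]
  have : (‖ρ‖₊ ^ (m:ℝ) : ℝ≥0) • ν (closedBall 0 1)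
      = ENNReal.ofReal (ρ ^ (m:ℝ)) * ENNReal.ofReal ((ν (closedBall 0 1)).toReal) := by
    rw [ENNReal.ofReal_toReal h1.ne, ENNReal.smul_def, smul_eq_mul]
    congr 1
    rw [ENNReal.ofReal, ENNReal.coe_inj]
    apply NNReal.eq
    rw [NNReal.coe_rpow, coe_nnnorm, Real.norm_eq_abs, abs_of_pos hρ,
      Real.coe_toNNReal _ (Real.rpow_nonneg hρ.le _)]
  rw [this, ← ENNReal.ofReal_mul (by positivity), mul_comm]

lemma isoF (n m : ℕ) (hm : n = m + 1) (e : EuclideanSpace ℝ (Fin n)) (he : ‖e‖ = 1) :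
    ∃ ι : EuclideanSpace ℝ (Fin m) →ₗᵢ[ℝ] EuclideanSpace ℝ (Fin n),
      (∀ v, (inner ℝ e (ι v) : ℝ) = 0) ∧
      (∀ w : EuclideanSpace ℝ (Fin n), (inner ℝ e w : ℝ) = 0 → ∃ v, ι v = w) := by
  have he0 : e ≠ 0 := by intro h; rw [h, norm_zero] at he; norm_num at he
  haveI : Fact (Module.finrank ℝ (EuclideanSpace ℝ (Fin n)) = m + 1) :=
    ⟨by rw [finrank_euclideanSpace_fin, hm]⟩
  set B := OrthonormalBasis.fromOrthogonalSpanSingleton (𝕜 := ℝ) m he0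
  set K := (Submodule.span ℝ {e})ᗮ
  refine ⟨K.subtypeₗᵢ.comp B.repr.symm.toLinearIsometry, fun v => ?_, fun w hw => ?_⟩
  · have : ((B.repr.symm v : K) : EuclideanSpace ℝ (Fin n)) ∈ K := (B.repr.symm v).2
    exact Submodule.mem_orthogonal_singleton_iff_inner_right.mp this
  · have hwK : w ∈ K := Submodule.mem_orthogonal_singleton_iff_inner_right.mpr hw
    exact ⟨B.repr ⟨w, hwK⟩, by simp [K]⟩

lemma sqrt_lip {M a b : ℝ} (hM : 0 < M)
    (hMA : M ≤ Real.sqrt (1 - a^2)) (hMB : M ≤ Real.sqrt (1 - b^2))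
    (ha1 : a^2 ≤ 1) (hb1 : b^2 ≤ 1) :
    |Real.sqrt (1 - a^2) - Real.sqrt (1 - b^2)| ≤ M⁻¹ * |a - b| := by
  set A := Real.sqrt (1 - a^2) with hA
  set B := Real.sqrt (1 - b^2) with hB
  have hA2 : A^2 = 1 - a^2 := Real.sq_sqrt (by linarith)
  have hB2 : B^2 = 1 - b^2 := Real.sq_sqrt (by linarith)
  have key : (A - B) * (A + B) = (b - a) * (b + a) := by nlinarith [hA2, hB2]
  have h1 : 4*M^2 ≤ (A+B)^2 := by nlinarith [hMA, hMB, hM.le]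
  have h2 : (a+b)^2 ≤ 4 := by nlinarith [sq_nonneg (a-b)]
  have h3 : ((A-B)*(A+B))^2 = (a-b)^2*(a+b)^2 := by rw [key]; ring
  have hsq : (M * (A - B))^2 ≤ (a - b)^2 := by
    nlinarith [h3, mul_le_mul_of_nonneg_left h1 (sq_nonneg (A-B)),
      mul_le_mul_of_nonneg_left h2 (sq_nonneg (a-b))]
  have habs : |M * (A - B)| ≤ |a - b| := by
    have := Real.sqrt_le_sqrt hsq
    rwa [Real.sqrt_sq_eq_abs, Real.sqrt_sq_eq_abs] at this
  rw [abs_mul, abs_of_pos hM] at habs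
  calc |A - B| = M⁻¹ * (M * |A - B|) := by field_simp
  _ ≤ M⁻¹ * |a - b| := by
      apply mul_le_mul_of_nonneg_left habs (by positivity)

lemma capUp (n : ℕ) (hn : 2 ≤ n) : ∃ K : ℝ, 0 < K ∧
    ∀ e : EuclideanSpace ℝ (Fin n), ‖e‖ = 1 → ∀ a : ℝ, 0 < a → a < 1 →
    μH[(n:ℝ)-1] {ω ∈ Metric.sphere (0 : EuclideanSpace ℝ (Fin n)) 1 | a ≤ (inner ℝ e ω : ℝ)}
      ≤ ENNReal.ofReal (K * a⁻¹ ^ ((n:ℝ)-1) * (1 - a^2) ^ (((n:ℝ)-1)/2)) := by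
  set m := n - 1 with hmdef
  have hm : n = m + 1 := by omega
  set d : ℝ := (n:ℝ) - 1 with hddef
  have hd : d = (m:ℝ) := by rw [hddef, hm]; push_cast; ring
  have hd0 : 0 ≤ d := by rw [hd]; positivity
  obtain ⟨b, hb, hball⟩ := ballF m
  refine ⟨2 ^ d * b, by positivity, fun e he a ha0 ha1 => ?_⟩
  obtain ⟨ι, hι0, hιsurj⟩ := isoF n m hm e he
  set ρ := Real.sqrt (1 - a^2) with hρdef
  have ha2 : a^2 < 1 := by nlinarith
  have hρpos : 0 < ρ := Real.sqrt_pos.mpr (by linarith)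
  have hρ2 : ρ^2 = 1 - a^2 := Real.sq_sqrt (by linarith)
  have hρ1 : ρ ≤ 1 := by nlinarith [hρpos]
  set G := fun v : EuclideanSpace ℝ (Fin m) => ι v + Real.sqrt (1 - ‖v‖^2) • e with hGdef
  -- the cap is contained in the image of the ball under the graph map G
  have hsub : {ω ∈ Metric.sphere (0 : EuclideanSpace ℝ (Fin n)) 1 | a ≤ (inner ℝ e ω : ℝ)}
      ⊆ G '' (closedBall 0 ρ) := by
    rintro ω ⟨hωS, hωa⟩
    have hω1 : ‖ω‖ = 1 := by simpa using hωS
    set s : ℝ := (inner ℝ e ω : ℝ) with hsdef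
    have hs1 : s ≤ 1 := by
      have := real_inner_le_norm e ω
      rwa [he, hω1, one_mul] at this
    have hs0 : 0 < s := lt_of_lt_of_le ha0 hωa
    have hee : (inner ℝ e e : ℝ) = 1 := by
      rw [real_inner_self_eq_norm_mul_norm, he]; norm_num
    set w := ω - s • e with hwdef
    have hw : (inner ℝ e w : ℝ) = 0 := by
      rw [hwdef, inner_sub_right, real_inner_smul_right, hee]; ring
    obtain ⟨v, hv⟩ := hιsurj w hw
    have hnw : ‖w‖^2 = 1 - s^2 := by
      rw [hwdef, @norm_sub_sq_real, real_inner_smul_right, norm_smul, hω1, he]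
      have hcm : (inner ℝ ω e : ℝ) = s := by rw [real_inner_comm]
      rw [hcm, Real.norm_eq_abs, mul_one, one_pow, sq_abs]
      ring
    have hnv : ‖v‖^2 = 1 - s^2 := by rw [← hv] at hnw; rwa [ι.norm_map] at hnw
    refine ⟨v, ?_, ?_⟩
    · rw [mem_closedBall, dist_zero_right]
      have h2 : ‖v‖^2 ≤ ρ^2 := by rw [hnv, hρ2]; nlinarith
      have h3 := Real.sqrt_le_sqrt h2
      rwa [Real.sqrt_sq (norm_nonneg v), Real.sqrt_sq hρpos.le] at h3
    · rw [hGdef]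
      simp only
      rw [hv, hnv]
      have : Real.sqrt (1 - (1 - s^2)) = s := by
        rw [show (1 - (1-s^2)) = s^2 by ring, Real.sqrt_sq hs0.le]
      rw [this, hwdef]
      abel
  -- G is Lipschitz on the ball with constant 1 + a⁻¹
  have hlip : LipschitzOnWith (Real.toNNReal (1 + a⁻¹)) G (closedBall 0 ρ) := by
    apply LipschitzOnWith.of_dist_le_mul
    intro v hv w hw
    rw [mem_closedBall, dist_zero_right] at hv hw
    have hv2 : ‖v‖^2 ≤ ρ^2 := pow_le_pow_left₀ (norm_nonneg v) hv 2
    have hw2 : ‖w‖^2 ≤ ρ^2 := pow_le_pow_left₀ (norm_nonneg w) hw 2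
    have hvs : ‖v‖^2 ≤ 1 := by rw [hρ2] at hv2; nlinarith [sq_nonneg a]
    have hws : ‖w‖^2 ≤ 1 := by rw [hρ2] at hw2; nlinarith [sq_nonneg a]
    have hMv : a ≤ Real.sqrt (1 - ‖v‖^2) := by
      have h := Real.sqrt_le_sqrt (by rw [hρ2] at hv2; linarith : a^2 ≤ 1 - ‖v‖^2)
      rwa [Real.sqrt_sq ha0.le] at h
    have hMw : a ≤ Real.sqrt (1 - ‖w‖^2) := by
      have h := Real.sqrt_le_sqrt (by rw [hρ2] at hw2; linarith : a^2 ≤ 1 - ‖w‖^2)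
      rwa [Real.sqrt_sq ha0.le] at h
    have hΔ := sqrt_lip ha0 hMv hMw hvs hws
    have habs : |‖v‖ - ‖w‖| ≤ ‖v - w‖ := abs_norm_sub_norm_le v w
    rw [Real.coe_toNNReal _ (by positivity), dist_eq_norm, dist_eq_norm]
    have hGsub : G v - G w = ι (v - w)
        + (Real.sqrt (1 - ‖v‖^2) - Real.sqrt (1 - ‖w‖^2)) • e := by
      rw [hGdef]; simp only [ι.map_sub, sub_smul]; abel
    calc ‖G v - G w‖ ≤ ‖ι (v - w)‖
        + ‖(Real.sqrt (1 - ‖v‖^2) - Real.sqrt (1 - ‖w‖^2)) • e‖ := by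
          rw [hGsub]; exact norm_add_le _ _
    _ ≤ ‖v - w‖ + a⁻¹ * ‖v - w‖ := by
        rw [ι.norm_map, norm_smul, he, mul_one, Real.norm_eq_abs]
        have : |Real.sqrt (1 - ‖v‖^2) - Real.sqrt (1 - ‖w‖^2)| ≤ a⁻¹ * ‖v - w‖ :=
          le_trans hΔ (mul_le_mul_of_nonneg_left habs (by positivity))
        linarith [this]
    _ = (1 + a⁻¹) * ‖v - w‖ := by ring
  -- conclude
  have hmeas := le_trans (measure_mono hsub) (hlip.hausdorffMeasure_image_le hd0)
  have hball' : μH[d] (Metric.closedBall (0 : EuclideanSpace ℝ (Fin m)) ρ)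
      = ENNReal.ofReal (b * ρ ^ d) := by rw [hd]; exact hball ρ hρpos
  rw [hball'] at hmeas
  refine le_trans hmeas ?_
  have h1a : (0:ℝ) < 1 + a⁻¹ := by positivity
  have hcoe : ((Real.toNNReal (1 + a⁻¹) : ℝ≥0) : ℝ≥0∞) = ENNReal.ofReal (1 + a⁻¹) := rfl
  rw [hcoe, ENNReal.ofReal_rpow_of_pos h1a, ← ENNReal.ofReal_mul (by positivity)]
  apply ENNReal.ofReal_le_ofReal
  have hρd : ρ ^ d = (1 - a^2) ^ (d/2) := by
    rw [hρdef, Real.sqrt_eq_rpow, ← Real.rpow_mul (by linarith : (0:ℝ) ≤ 1 - a^2)]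
    congr 1; ring
  have hpow : (1 + a⁻¹) ^ d ≤ 2 ^ d * a⁻¹ ^ d := by
    rw [← Real.mul_rpow (by norm_num) (by positivity)]
    apply Real.rpow_le_rpow (by positivity) ?_ hd0
    have h1 : (0:ℝ) < a⁻¹ := by positivity
    have h2 : a * a⁻¹ = 1 := mul_inv_cancel₀ ha0.ne'
    nlinarith
  calc (1 + a⁻¹) ^ d * (b * ρ ^ d) ≤ (2 ^ d * a⁻¹ ^ d) * (b * ρ ^ d) := by
        apply mul_le_mul_of_nonneg_right hpow (by positivity)
  _ = 2 ^ d * b * a⁻¹ ^ d * (1 - a^2) ^ (d/2) := by rw [hρd]; ring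

lemma capLow (n : ℕ) (hn : 2 ≤ n) : ∃ k : ℝ, 0 < k ∧
    ∀ e : EuclideanSpace ℝ (Fin n), ‖e‖ = 1 → ∀ δ : ℝ, 0 < δ → δ ≤ 1 →
    ENNReal.ofReal (k * δ ^ (((n:ℝ)-1)/2))
      ≤ μH[(n:ℝ)-1] {ω ∈ Metric.sphere (0 : EuclideanSpace ℝ (Fin n)) 1 | 1 - δ ≤ (inner ℝ e ω : ℝ)} := by
  set m := n - 1 with hmdef
  have hm : n = m + 1 := by omega
  set d : ℝ := (n:ℝ) - 1 with hddef
  have hd : d = (m:ℝ) := by rw [hddef, hm]; push_cast; ring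
  have hd0 : 0 ≤ d := by rw [hd]; positivity
  obtain ⟨b, hb, hball⟩ := ballF m
  refine ⟨b, hb, fun e he δ hδ0 hδ1 => ?_⟩
  obtain ⟨ι, hι0, hιsurj⟩ := isoF n m hm e he
  have hee : (inner ℝ e e : ℝ) = 1 := by
    rw [real_inner_self_eq_norm_mul_norm, he]; norm_num
  set ρ := Real.sqrt δ with hρdef
  have hρpos : 0 < ρ := Real.sqrt_pos.mpr hδ0
  have hρ2 : ρ^2 = δ := Real.sq_sqrt hδ0.le
  set P : EuclideanSpace ℝ (Fin n) → EuclideanSpace ℝ (Fin n) :=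
    fun w => w - (inner ℝ e w : ℝ) • e with hPdef
  have hcontr : ∀ u : EuclideanSpace ℝ (Fin n), ‖u - (inner ℝ e u : ℝ) • e‖ ≤ ‖u‖ := by
    intro u
    have h2 : ‖u - (inner ℝ e u : ℝ) • e‖^2 ≤ ‖u‖^2 := by
      rw [@norm_sub_sq_real, real_inner_smul_right, norm_smul, he, Real.norm_eq_abs,
        real_inner_comm u e, mul_one, sq_abs]
      nlinarith [sq_nonneg (inner ℝ e u : ℝ)]
    have h3 := Real.sqrt_le_sqrt h2
    rwa [Real.sqrt_sq (norm_nonneg _), Real.sqrt_sq (norm_nonneg _)] at h3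
  have hPlip : LipschitzWith 1 P := by
    apply LipschitzWith.of_dist_le_mul
    intro w w'
    rw [dist_eq_norm, dist_eq_norm, NNReal.coe_one, one_mul, hPdef]
    simp only
    have heq : w - (inner ℝ e w : ℝ) • e - (w' - (inner ℝ e w' : ℝ) • e)
        = (w - w') - (inner ℝ e (w - w') : ℝ) • e := by
      rw [inner_sub_right, sub_smul]; abel
    rw [heq]
    exact hcontr _
  have hsub : ι '' (closedBall 0 ρ)
      ⊆ P '' {ω ∈ Metric.sphere (0 : EuclideanSpace ℝ (Fin n)) 1 | 1 - δ ≤ (inner ℝ e ω : ℝ)} := by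
    rintro _ ⟨v, hv, rfl⟩
    rw [mem_closedBall, dist_zero_right] at hv
    have hv2 : ‖v‖^2 ≤ δ := by
      have := pow_le_pow_left₀ (norm_nonneg v) hv 2
      rwa [hρ2] at this
    have hv1 : ‖v‖^2 ≤ 1 := le_trans hv2 hδ1
    set c := Real.sqrt (1 - ‖v‖^2) with hcdef
    have hc2 : c^2 = 1 - ‖v‖^2 := Real.sq_sqrt (by linarith)
    have hιe : (inner ℝ (ι v) e : ℝ) = 0 := by rw [real_inner_comm]; exact hι0 v
    set ω := ι v + c • e with hωdef
    have hinner : (inner ℝ e ω : ℝ) = c := by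
      rw [hωdef, inner_add_right, real_inner_smul_right, hee, hι0 v]; ring
    have hωS : ‖ω‖ = 1 := by
      have h2 : ‖ω‖^2 = 1 := by
        rw [hωdef, @norm_add_sq_real, real_inner_smul_right, hιe, norm_smul, he,
          Real.norm_eq_abs, ι.norm_map, mul_one, sq_abs]
        rw [hc2]; ring
      have h3 := congrArg Real.sqrt h2
      rwa [Real.sqrt_sq (norm_nonneg _), Real.sqrt_one] at h3
    have hcap : 1 - δ ≤ (inner ℝ e ω : ℝ) := by
      rw [hinner, hcdef]
      have h4 : (1-δ)^2 ≤ 1 - ‖v‖^2 := by nlinarith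
      have h5 := Real.sqrt_le_sqrt h4
      rwa [Real.sqrt_sq (by linarith)] at h5
    refine ⟨ω, ⟨?_, hcap⟩, ?_⟩
    · rwa [mem_sphere_zero_iff_norm]
    · rw [hPdef]
      simp only
      rw [hinner, hωdef]
      abel
  have hball' : μH[d] (Metric.closedBall (0 : EuclideanSpace ℝ (Fin m)) ρ)
      = ENNReal.ofReal (b * ρ ^ d) := by rw [hd]; exact hball ρ hρpos
  have hρd : ρ ^ d = δ ^ (d/2) := by
    rw [hρdef, Real.sqrt_eq_rpow, ← Real.rpow_mul hδ0.le]
    congr 1; ring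
  calc ENNReal.ofReal (b * δ ^ (d/2)) = ENNReal.ofReal (b * ρ ^ d) := by rw [hρd]
  _ = μH[d] (Metric.closedBall (0 : EuclideanSpace ℝ (Fin m)) ρ) := hball'.symm
  _ = μH[d] (ι '' (closedBall 0 ρ)) :=
      (ι.isometry.hausdorffMeasure_image (Or.inl hd0) _).symm
  _ ≤ μH[d] (P '' {ω ∈ Metric.sphere (0 : EuclideanSpace ℝ (Fin n)) 1 | 1 - δ ≤ (inner ℝ e ω : ℝ)}) :=
      measure_mono hsub
  _ ≤ (1:ℝ≥0) ^ d * μH[d] {ω ∈ Metric.sphere (0 : EuclideanSpace ℝ (Fin n)) 1 | 1 - δ ≤ (inner ℝ e ω : ℝ)} :=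
      hPlip.hausdorffMeasure_image_le hd0 _
  _ = μH[d] {ω ∈ Metric.sphere (0 : EuclideanSpace ℝ (Fin n)) 1 | 1 - δ ≤ (inner ℝ e ω : ℝ)} := by
      simp

lemma sphereTotal (n : ℕ) (hn : 2 ≤ n) : ∃ T : ℝ, 0 < T ∧
    μH[(n:ℝ)-1] (Metric.sphere (0 : EuclideanSpace ℝ (Fin n)) 1) ≤ ENNReal.ofReal T := by
  obtain ⟨K, hK, hcap⟩ := capUp n hn
  set d : ℝ := (n:ℝ) - 1 with hddef
  have hd0 : 0 ≤ d := by rw [hddef]; simp; exact_mod_cast le_trans (by norm_num) hn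
  have hn0 : (0:ℝ) < n := by positivity
  set a : ℝ := (Real.sqrt n)⁻¹ with hadef
  have hsn : 1 < Real.sqrt n := by
    have : (1:ℝ) < n := Nat.one_lt_cast.mpr (by omega)
    have := Real.sqrt_lt_sqrt (by norm_num) this
    rwa [Real.sqrt_one] at this
  have ha0 : 0 < a := by rw [hadef]; positivity
  have ha1 : a < 1 := by
    rw [hadef]
    exact inv_lt_one_of_one_lt₀ hsn
  have ha2 : a^2 = (n:ℝ)⁻¹ := by
    rw [hadef, inv_pow, Real.sq_sqrt hn0.le]
  set eb : Fin n × Bool → EuclideanSpace ℝ (Fin n) :=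
    fun p => EuclideanSpace.single p.1 (if p.2 then (1:ℝ) else -1) with hebdef
  have hebnorm : ∀ p, ‖eb p‖ = 1 := by
    intro p
    rw [hebdef]
    simp only
    rw [EuclideanSpace.norm_single]
    cases p.2 <;> simp
  have hcover : Metric.sphere (0 : EuclideanSpace ℝ (Fin n)) 1 ⊆
      ⋃ p : Fin n × Bool, {ω ∈ Metric.sphere (0 : EuclideanSpace ℝ (Fin n)) 1 |
        a ≤ (inner ℝ (eb p) ω : ℝ)} := by
    intro ω hω
    have hω1 : ‖ω‖ = 1 := by simpa using hω
    have hex : ∃ i, a ≤ |ω i| := by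
      by_contra hcon
      push_neg at hcon
      have hsum : ∑ i, ‖ω i‖^2 < ∑ _i : Fin n, a^2 := by
        apply Finset.sum_lt_sum_of_nonempty
        · haveI : Nonempty (Fin n) := ⟨⟨0, by omega⟩⟩
          exact Finset.univ_nonempty
        · intro i _
          rw [Real.norm_eq_abs]
          have h1 := hcon i
          have h2 : 0 ≤ |ω i| := abs_nonneg _
          nlinarith
      rw [Finset.sum_const, Finset.card_univ, Fintype.card_fin, nsmul_eq_mul, ha2,
        mul_inv_cancel₀ hn0.ne'] at hsum
      have : ∑ i, ‖ω i‖^2 = 1 := by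
        have := EuclideanSpace.norm_eq ω
        rw [hω1] at this
        have h2 := congrArg (fun x : ℝ => x^2) this
        simp only [one_pow] at h2
        rw [Real.sq_sqrt (by positivity)] at h2
        exact h2.symm
      linarith
    obtain ⟨i, hi⟩ := hex
    rcases le_or_gt 0 (ω i) with hpos | hneg
    · refine mem_iUnion.mpr ⟨(i, true), hω, ?_⟩
      have : (inner ℝ (eb (i, true)) ω : ℝ) = ω i := by
        rw [hebdef]; simp [EuclideanSpace.inner_single_left]
      rw [this]
      rwa [abs_of_nonneg hpos] at hi
    · refine mem_iUnion.mpr ⟨(i, false), hω, ?_⟩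
      have : (inner ℝ (eb (i, false)) ω : ℝ) = -ω i := by
        rw [hebdef]; simp [EuclideanSpace.inner_single_left]
      rw [this]
      rwa [abs_of_neg hneg] at hi
  refine ⟨(n * 2) * (K * a⁻¹ ^ d) + 1, by positivity, ?_⟩
  calc μH[d] (Metric.sphere (0 : EuclideanSpace ℝ (Fin n)) 1)
      ≤ ∑ p : Fin n × Bool, μH[d] {ω ∈ Metric.sphere (0 : EuclideanSpace ℝ (Fin n)) 1 |
          a ≤ (inner ℝ (eb p) ω : ℝ)} :=
        le_trans (measure_mono hcover) (measure_iUnion_fintype_le _ _)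
  _ ≤ ∑ _p : Fin n × Bool, ENNReal.ofReal (K * a⁻¹ ^ d) := by
      apply Finset.sum_le_sum
      intro p _
      refine le_trans (hcap (eb p) (hebnorm p) a ha0 ha1) (ENNReal.ofReal_le_ofReal ?_)
      have h1 : (1 - a^2) ^ (d/2) ≤ 1 := by
        apply Real.rpow_le_one (by nlinarith) (by nlinarith) (by positivity)
      nlinarith [Real.rpow_nonneg (le_of_lt (by positivity : (0:ℝ) < a⁻¹)) d,
        mul_nonneg hK.le (Real.rpow_nonneg (by positivity : (0:ℝ) ≤ a⁻¹) d)]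
  _ = (Fintype.card (Fin n × Bool)) • ENNReal.ofReal (K * a⁻¹ ^ d) := by
      rw [Finset.sum_const, Finset.card_univ]
  _ ≤ ENNReal.ofReal ((n * 2) * (K * a⁻¹ ^ d) + 1) := by
      rw [Fintype.card_prod, Fintype.card_fin, Fintype.card_bool, nsmul_eq_mul]
      rw [show ((n * 2 : ℕ) : ℝ≥0∞) = ENNReal.ofReal ((n:ℝ) * 2) by
        rw [← ENNReal.ofReal_natCast]; congr 1; push_cast; ring]
      rw [← ENNReal.ofReal_mul (by positivity)]
      apply ENNReal.ofReal_le_ofReal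
      nlinarith [mul_nonneg hK.le (Real.rpow_nonneg (by positivity : (0:ℝ) ≤ a⁻¹) d)]

lemma capBound (n : ℕ) (hn : 2 ≤ n) : ∃ K₂ T : ℝ, 0 < K₂ ∧ 0 < T ∧
    μH[(n:ℝ)-1] (Metric.sphere (0 : EuclideanSpace ℝ (Fin n)) 1) ≤ ENNReal.ofReal T ∧
    ∀ e : EuclideanSpace ℝ (Fin n), ‖e‖ = 1 → ∀ δ : ℝ, 0 < δ →
    μH[(n:ℝ)-1] {ω ∈ Metric.sphere (0 : EuclideanSpace ℝ (Fin n)) 1 | 1 - δ ≤ (inner ℝ e ω : ℝ)}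
      ≤ ENNReal.ofReal (K₂ * δ ^ (((n:ℝ)-1)/2)) := by
  obtain ⟨K, hK, hcap⟩ := capUp n hn
  obtain ⟨T, hT, htot⟩ := sphereTotal n hn
  set d : ℝ := (n:ℝ) - 1 with hddef
  have hd0 : 0 ≤ d := by
    rw [hddef]; simp only [sub_nonneg]; exact Nat.one_le_cast.mpr (by omega)
  have hhalf : (0:ℝ) ≤ d/2 := by positivity
  refine ⟨K * 2^d * 2^(d/2) + T * 2^(d/2), T, by positivity, hT, htot, fun e he δ hδ0 => ?_⟩
  have h2d : (0:ℝ) ≤ 2^d := Real.rpow_nonneg (by norm_num) d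
  have h2d2 : (0:ℝ) ≤ 2^(d/2) := Real.rpow_nonneg (by norm_num) (d/2)
  have hδd : (0:ℝ) ≤ δ^(d/2) := Real.rpow_nonneg hδ0.le (d/2)
  rcases le_or_gt δ (1/2) with hc | hc
  · -- small δ: use capUp with a = 1 - δ
    have ha0 : 0 < 1 - δ := by linarith
    have ha1 : 1 - δ < 1 := by linarith
    refine le_trans (hcap e he (1-δ) ha0 ha1) (ENNReal.ofReal_le_ofReal ?_)
    have hinv : (1-δ)⁻¹ ≤ 2 := by
      rw [inv_le_comm₀ ha0 (by norm_num)]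
      linarith
    have h1 : (1-δ)⁻¹ ^ d ≤ 2^d :=
      Real.rpow_le_rpow (by positivity) hinv hd0
    have h2 : (1 - (1-δ)^2) ^ (d/2) ≤ 2^(d/2) * δ^(d/2) := by
      rw [← Real.mul_rpow (by norm_num) hδ0.le]
      apply Real.rpow_le_rpow (by nlinarith) (by nlinarith) hhalf
    calc K * (1-δ)⁻¹ ^ d * (1 - (1-δ)^2) ^ (d/2)
        ≤ K * 2^d * (2^(d/2) * δ^(d/2)) := by
          apply mul_le_mul (mul_le_mul le_rfl h1 (by positivity) hK.le) h2
            (Real.rpow_nonneg (by nlinarith) _) (by positivity)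
    _ ≤ (K * 2^d * 2^(d/2) + T * 2^(d/2)) * δ^(d/2) := by
          nlinarith [mul_nonneg (mul_nonneg hT.le h2d2) hδd]
  · -- large δ: use the total measure
    refine le_trans (le_trans (measure_mono (fun ω hω => hω.1)) htot)
      (ENNReal.ofReal_le_ofReal ?_)
    have h1 : (1:ℝ) ≤ 2^(d/2) * δ^(d/2) := by
      rw [← Real.mul_rpow (by norm_num) hδ0.le]
      calc (1:ℝ) = 1 ^ (d/2) := (Real.one_rpow _).symm
      _ ≤ (2*δ)^(d/2) := Real.rpow_le_rpow (by norm_num) (by linarith) hhalf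
    nlinarith [mul_nonneg (mul_nonneg hK.le h2d) h2d2]

lemma unitvec (n : ℕ) (hn : 2 ≤ n) (x : EuclideanSpace ℝ (Fin n)) :
    ∃ e : EuclideanSpace ℝ (Fin n), ‖e‖ = 1 ∧ x = ‖x‖ • e := by
  rcases eq_or_ne x 0 with rfl | hx
  · refine ⟨EuclideanSpace.single ⟨0, by omega⟩ (1:ℝ), ?_, by simp⟩
    rw [EuclideanSpace.norm_single]; norm_num
  · refine ⟨‖x‖⁻¹ • x, ?_, ?_⟩
    · rw [norm_smul, Real.norm_eq_abs, abs_of_nonneg (inv_nonneg.mpr (norm_nonneg x)),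
        inv_mul_cancel₀ (norm_ne_zero_iff.mpr hx)]
    · rw [smul_smul, mul_inv_cancel₀ (norm_ne_zero_iff.mpr hx), one_smul]

lemma integrOn (n : ℕ) (hn : 2 ≤ n) (t : ℝ) (x : EuclideanSpace ℝ (Fin n)) :
    IntegrableOn (fun ω => Real.exp ((inner ℝ x ω : ℝ) - t))
      (Metric.sphere (0 : EuclideanSpace ℝ (Fin n)) 1) μH[(n:ℝ)-1] := by
  obtain ⟨K₂, T, hK₂, hT, htot, _⟩ := capBound n hn
  have hμS : μH[(n:ℝ)-1] (Metric.sphere (0 : EuclideanSpace ℝ (Fin n)) 1) ≠ ⊤ :=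
    (lt_of_le_of_lt htot ENNReal.ofReal_lt_top).ne
  have hfc : Continuous (fun ω : EuclideanSpace ℝ (Fin n) =>
      Real.exp ((inner ℝ x ω : ℝ) - t)) := (((innerSL ℝ x).continuous).sub continuous_const).rexp
  apply Measure.integrableOn_of_bounded hμS hfc.aestronglyMeasurable
    (M := Real.exp (‖x‖ - t))
  rw [ae_restrict_iff' (isClosed_sphere).measurableSet]
  apply ae_of_all
  intro ω hω
  have hω1 : ‖ω‖ = 1 := by simpa using hω
  rw [Real.norm_eq_abs, abs_of_pos (Real.exp_pos _)]
  apply Real.exp_le_exp.mpr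
  have := real_inner_le_norm x ω
  rw [hω1, mul_one] at this
  linarith

lemma lowerB (n : ℕ) (hn : 2 ≤ n) : ∃ c : ℝ, 0 < c ∧
    ∀ (t : ℝ) (x : EuclideanSpace ℝ (Fin n)),
      c * (1 + ‖x‖) ^ (-((n : ℝ) - 1) / 2) * Real.exp (‖x‖ - t) ≤ phiFn n t x := by
  obtain ⟨k, hk, hcapL⟩ := capLow n hn
  obtain ⟨K₂, T, hK₂, hT, htot, _⟩ := capBound n hn
  set d : ℝ := (n:ℝ) - 1 with hddef
  have hd0 : 0 ≤ d := by
    rw [hddef]; simp only [sub_nonneg]; exact Nat.one_le_cast.mpr (by omega)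
  refine ⟨k * Real.exp (-1), by positivity, fun t x => ?_⟩
  obtain ⟨e, he, hxe⟩ := unitvec n hn x
  set r := ‖x‖ with hrdef
  have hr0 : (0:ℝ) ≤ r := norm_nonneg x
  set δ : ℝ := (1 + r)⁻¹ with hδdef
  have h1r : (0:ℝ) < 1 + r := by linarith
  have hδ0 : 0 < δ := by positivity
  have hδ1 : δ ≤ 1 := by
    rw [hδdef, inv_le_one_iff₀]; right; linarith
  set capset := {ω ∈ Metric.sphere (0 : EuclideanSpace ℝ (Fin n)) 1 | 1 - δ ≤ (inner ℝ e ω : ℝ)}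
    with hcapdef
  have hcs : MeasurableSet capset := by
    have : capset = Metric.sphere (0 : EuclideanSpace ℝ (Fin n)) 1
        ∩ {ω | 1 - δ ≤ (inner ℝ e ω : ℝ)} := rfl
    rw [this]
    exact (isClosed_sphere).measurableSet.inter
      ((isClosed_le continuous_const (innerSL ℝ e).continuous).measurableSet)
  have hsub : capset ⊆ Metric.sphere (0 : EuclideanSpace ℝ (Fin n)) 1 := fun ω hω => hω.1
  have hcm : μH[d] capset ≠ ⊤ :=
    (lt_of_le_of_lt (le_trans (measure_mono hsub) htot) ENNReal.ofReal_lt_top).ne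
  have hint := integrOn n hn t x
  have hlow1 : ∀ ω ∈ capset, Real.exp (r - 1 - t) ≤ Real.exp ((inner ℝ x ω : ℝ) - t) := by
    intro ω hω
    apply Real.exp_le_exp.mpr
    have h1 : (inner ℝ x ω : ℝ) = r * (inner ℝ e ω : ℝ) := by
      rw [hxe, real_inner_smul_left]
    have h2 : 1 - δ ≤ (inner ℝ e ω : ℝ) := hω.2
    have h3 : r * (1 - δ) ≤ r * (inner ℝ e ω : ℝ) := mul_le_mul_of_nonneg_left h2 hr0
    have h4 : r * δ ≤ 1 := by
      rw [hδdef]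
      rw [mul_inv_le_iff₀ h1r]
      linarith
    nlinarith
  have hmeaslow : k * δ ^ (d/2) ≤ (μH[d] capset).toReal := by
    rw [← ENNReal.ofReal_le_iff_le_toReal hcm]
    exact hcapL e he δ hδ0 hδ1
  have step1 : Real.exp (r - 1 - t) * (μH[d] capset).toReal ≤ ∫ ω in capset,
      Real.exp ((inner ℝ x ω : ℝ) - t) ∂μH[d] :=
    by have h := setIntegral_ge_of_const_le hcs hcm hlow1 (hint.mono_set hsub); rw [smul_eq_mul, mul_comm] at h; exact h
  have step2 : ∫ ω in capset, Real.exp ((inner ℝ x ω : ℝ) - t) ∂μH[d]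
      ≤ phiFn n t x := by
    rw [phiFn]
    apply setIntegral_mono_set hint
    · exact ae_of_all _ (fun ω => (Real.exp_pos _).le)
    · exact HasSubset.Subset.eventuallyLE hsub
  have hδd : δ ^ (d/2) = (1 + r) ^ (-(d/2)) := by
    rw [hδdef, Real.inv_rpow h1r.le, ← Real.rpow_neg h1r.le]
  calc k * Real.exp (-1) * (1 + r) ^ (-d / 2) * Real.exp (r - t)
      = Real.exp (r - 1 - t) * (k * δ ^ (d/2)) := by
        rw [hδd, neg_div, show r - 1 - t = (r - t) + (-1) by ring, Real.exp_add]
        ring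
  _ ≤ Real.exp (r - 1 - t) * (μH[d] capset).toReal := by
        apply mul_le_mul_of_nonneg_left hmeaslow (Real.exp_pos _).le
  _ ≤ phiFn n t x := le_trans step1 step2

set_option maxHeartbeats 1000000 in
lemma upperB (n : ℕ) (hn : 2 ≤ n) : ∃ C : ℝ, 0 < C ∧
    ∀ (t : ℝ) (x : EuclideanSpace ℝ (Fin n)),
      phiFn n t x ≤ C * (1 + ‖x‖) ^ (-((n : ℝ) - 1) / 2) * Real.exp (‖x‖ - t) := by
  obtain ⟨K₂, T, hK₂, hT, htot, hcapB⟩ := capBound n hn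
  set d : ℝ := (n:ℝ) - 1 with hddef
  have hd0 : 0 ≤ d := by
    rw [hddef]; simp only [sub_nonneg]; exact Nat.one_le_cast.mpr (by omega)
  have hhalf : (0:ℝ) ≤ d/2 := by positivity
  have hdn : d/2 ≤ (n:ℝ) := by
    rw [hddef]; have : (0:ℝ) ≤ (n:ℝ) := Nat.cast_nonneg n; linarith
  set ρe : ℝ := Real.exp (-1) with hρedef
  have hρe0 : 0 < ρe := Real.exp_pos _
  have hρe1 : ρe < 1 := by rw [hρedef]; exact Real.exp_lt_one_iff.mpr (by norm_num)
  have hsum : Summable (fun j : ℕ => ((j:ℝ)+1)^n * ρe^j) := by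
    have h1 : Summable (fun j : ℕ => ((j:ℝ))^n * ρe^j) :=
      summable_pow_mul_geometric_of_norm_lt_one n
        (by rwa [Real.norm_eq_abs, abs_of_pos hρe0])
    have h2 : Summable (fun j : ℕ => (((j+1):ℕ):ℝ)^n * ρe^(j+1)) :=
      (_root_.summable_nat_add_iff 1).mpr h1
    have h3 := h2.mul_left ρe⁻¹
    apply h3.congr
    intro j
    push_cast
    rw [pow_succ]
    field_simp
  set C₃ : ℝ := ∑' j : ℕ, ((j:ℝ)+1)^n * ρe^j with hC3def
  have hC₃0 : 0 ≤ C₃ := tsum_nonneg (fun j => by positivity)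
  set Creal : ℝ := K₂ * C₃ * 2^(d/2) + T * 2^(d/2) + 1 with hCrealdef
  have h2pos : (0:ℝ) < 2^(d/2) := Real.rpow_pos_of_pos (by norm_num) _
  have hCreal0 : 0 < Creal := by
    rw [hCrealdef]
    nlinarith [mul_nonneg (mul_nonneg hK₂.le hC₃0) h2pos.le, mul_pos hT h2pos]
  refine ⟨Creal, hCreal0, fun t x => ?_⟩
  obtain ⟨e, he, hxe⟩ := unitvec n hn x
  set r := ‖x‖ with hrdef
  have hr0 : (0:ℝ) ≤ r := norm_nonneg x
  have h1r : (0:ℝ) < 1 + r := by linarith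
  have hXpos : (0:ℝ) < (1+r)^(d/2) := Real.rpow_pos_of_pos h1r _
  have hfc : Continuous (fun ω : EuclideanSpace ℝ (Fin n) =>
      Real.exp ((inner ℝ x ω : ℝ) - t)) := (((innerSL ℝ x).continuous).sub continuous_const).rexp
  have hphi : phiFn n t x = (∫⁻ ω in Metric.sphere (0 : EuclideanSpace ℝ (Fin n)) 1,
      ENNReal.ofReal (Real.exp ((inner ℝ x ω : ℝ) - t)) ∂μH[d]).toReal := by
    rw [phiFn]
    exact integral_eq_lintegral_of_nonneg_ae (ae_of_all _ fun ω => (Real.exp_pos _).le)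
      hfc.aestronglyMeasurable
  have hCS : ∀ ω ∈ Metric.sphere (0 : EuclideanSpace ℝ (Fin n)) 1, (inner ℝ x ω : ℝ) ≤ r := by
    intro ω hω
    have hω1 : ‖ω‖ = 1 := by simpa using hω
    have := real_inner_le_norm x ω
    rwa [hω1, mul_one] at this
  suffices h : ∫⁻ ω in Metric.sphere (0 : EuclideanSpace ℝ (Fin n)) 1,
      ENNReal.ofReal (Real.exp ((inner ℝ x ω : ℝ) - t)) ∂μH[d]
      ≤ ENNReal.ofReal (Creal * (1+r)^(-(d/2)) * Real.exp (r - t)) by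
    rw [hphi]
    have hB0 : (0:ℝ) ≤ Creal * (1+r)^(-(d/2)) * Real.exp (r - t) := by
      have : (0:ℝ) ≤ (1+r)^(-(d/2)) := Real.rpow_nonneg h1r.le _
      positivity
    calc (∫⁻ ω in Metric.sphere (0 : EuclideanSpace ℝ (Fin n)) 1,
        ENNReal.ofReal (Real.exp ((inner ℝ x ω : ℝ) - t)) ∂μH[d]).toReal
        ≤ (ENNReal.ofReal (Creal * (1+r)^(-(d/2)) * Real.exp (r - t))).toReal :=
          ENNReal.toReal_mono ENNReal.ofReal_ne_top h
    _ = Creal * (1+r)^(-(d/2)) * Real.exp (r - t) := ENNReal.toReal_ofReal hB0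
    _ = Creal * (1+r)^(-d/2) * Real.exp (r - t) := by rw [neg_div]
  rcases le_or_gt r 1 with hr1 | hr1
  · -- small r
    calc ∫⁻ ω in Metric.sphere (0 : EuclideanSpace ℝ (Fin n)) 1,
        ENNReal.ofReal (Real.exp ((inner ℝ x ω : ℝ) - t)) ∂μH[d]
        ≤ ∫⁻ _ω in Metric.sphere (0 : EuclideanSpace ℝ (Fin n)) 1,
            ENNReal.ofReal (Real.exp (r - t)) ∂μH[d] := by
          apply setLIntegral_mono measurable_const
          intro ω hω
          exact ENNReal.ofReal_le_ofReal (Real.exp_le_exp.mpr (by linarith [hCS ω hω]))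
    _ = ENNReal.ofReal (Real.exp (r - t)) * μH[d] (Metric.sphere (0 : EuclideanSpace ℝ (Fin n)) 1) :=
          setLIntegral_const _ _
    _ ≤ ENNReal.ofReal (Real.exp (r - t)) * ENNReal.ofReal T := mul_le_mul_right htot _
    _ = ENNReal.ofReal (Real.exp (r - t) * T) := (ENNReal.ofReal_mul (Real.exp_pos _).le).symm
    _ ≤ ENNReal.ofReal (Creal * (1+r)^(-(d/2)) * Real.exp (r - t)) := by
          apply ENNReal.ofReal_le_ofReal
          have hA : (1+r)^(d/2) ≤ 2^(d/2) :=
            Real.rpow_le_rpow h1r.le (by linarith) hhalf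
          have hInv : ((2:ℝ)^(d/2))⁻¹ ≤ (1+r)^(-(d/2)) := by
            rw [Real.rpow_neg h1r.le]
            exact inv_anti₀ hXpos hA
          have hTC : T * 2^(d/2) ≤ Creal := by
            rw [hCrealdef]
            nlinarith [mul_nonneg (mul_nonneg hK₂.le hC₃0) h2pos.le]
          have step : T ≤ Creal * (1+r)^(-(d/2)) := by
            calc T = (T * 2^(d/2)) * ((2:ℝ)^(d/2))⁻¹ := by field_simp
            _ ≤ Creal * ((2:ℝ)^(d/2))⁻¹ :=
                mul_le_mul_of_nonneg_right hTC (by positivity)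
            _ ≤ Creal * (1+r)^(-(d/2)) :=
                mul_le_mul_of_nonneg_left hInv hCreal0.le
          nlinarith [Real.exp_pos (r - t), mul_le_mul_of_nonneg_left step (Real.exp_pos (r-t)).le]
  · -- large r
    have hrpos : (0:ℝ) < r := by linarith
    have hYpos : (0:ℝ) < r^(d/2) := Real.rpow_pos_of_pos hrpos _
    set A : ℕ → Set (EuclideanSpace ℝ (Fin n)) := fun j =>
      {ω | (j:ℝ) ≤ r - (inner ℝ x ω : ℝ) ∧ r - (inner ℝ x ω : ℝ) < (j:ℝ)+1} with hAdef
    have hcover : Metric.sphere (0 : EuclideanSpace ℝ (Fin n)) 1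
        = ⋃ j : ℕ, (Metric.sphere (0 : EuclideanSpace ℝ (Fin n)) 1 ∩ A j) := by
      apply Subset.antisymm
      · intro ω hω
        have hu0 : 0 ≤ r - (inner ℝ x ω : ℝ) := by linarith [hCS ω hω]
        exact mem_iUnion.mpr ⟨⌊r - (inner ℝ x ω : ℝ)⌋₊, hω,
          Nat.floor_le hu0, Nat.lt_floor_add_one _⟩
      · exact iUnion_subset (fun j ω hω => hω.1)
    set c : ℝ := Real.exp (r-t) * K₂ / r^(d/2) with hcdef
    have hc0 : 0 ≤ c := by positivity
    have hband : ∀ j : ℕ, ∫⁻ ω in Metric.sphere (0 : EuclideanSpace ℝ (Fin n)) 1 ∩ A j,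
        ENNReal.ofReal (Real.exp ((inner ℝ x ω : ℝ) - t)) ∂μH[d]
        ≤ ENNReal.ofReal (c * (((j:ℝ)+1)^n * ρe^j)) := by
      intro j
      have hρej : ρe ^ j = Real.exp (-(j:ℝ)) := by
        rw [hρedef, ← Real.exp_nat_mul]
        congr 1; ring
      have hδj0 : (0:ℝ) < ((j:ℝ)+1)/r := by positivity
      have hsubj : Metric.sphere (0 : EuclideanSpace ℝ (Fin n)) 1 ∩ A j
          ⊆ {ω ∈ Metric.sphere (0 : EuclideanSpace ℝ (Fin n)) 1 |
              1 - ((j:ℝ)+1)/r ≤ (inner ℝ e ω : ℝ)} := by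
        rintro ω ⟨hωS, hωA⟩
        refine ⟨hωS, ?_⟩
        have hinner : (inner ℝ x ω : ℝ) = r * (inner ℝ e ω : ℝ) := by
          rw [hxe, real_inner_smul_left]
        have hmd : r * (((j:ℝ)+1)/r) = (j:ℝ)+1 := mul_div_cancel₀ _ hrpos.ne'
        have hkey : r * (1 - ((j:ℝ)+1)/r) < r * (inner ℝ e ω : ℝ) := by
          nlinarith [hωA.2]
        have := (mul_lt_mul_iff_right₀ hrpos).mp hkey
        linarith
      calc ∫⁻ ω in Metric.sphere (0 : EuclideanSpace ℝ (Fin n)) 1 ∩ A j,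
          ENNReal.ofReal (Real.exp ((inner ℝ x ω : ℝ) - t)) ∂μH[d]
          ≤ ∫⁻ _ω in Metric.sphere (0 : EuclideanSpace ℝ (Fin n)) 1 ∩ A j,
            ENNReal.ofReal (Real.exp (r-t) * ρe^j) ∂μH[d] := by
            apply setLIntegral_mono measurable_const
            intro ω hω
            apply ENNReal.ofReal_le_ofReal
            have h1 : (inner ℝ x ω : ℝ) ≤ r - j := by linarith [hω.2.1]
            calc Real.exp ((inner ℝ x ω : ℝ) - t) ≤ Real.exp (r - j - t) :=
                Real.exp_le_exp.mpr (by linarith)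
            _ = Real.exp (r-t) * ρe^j := by
                rw [hρej, ← Real.exp_add]; congr 1; ring
      _ = ENNReal.ofReal (Real.exp (r-t) * ρe^j)
            * μH[d] (Metric.sphere (0 : EuclideanSpace ℝ (Fin n)) 1 ∩ A j) :=
            setLIntegral_const _ _
      _ ≤ ENNReal.ofReal (Real.exp (r-t) * ρe^j)
            * ENNReal.ofReal (K₂ * (((j:ℝ)+1)/r) ^ (d/2)) := by
            apply mul_le_mul_right
            exact le_trans (measure_mono hsubj) (hcapB e he _ hδj0)
      _ = ENNReal.ofReal ((Real.exp (r-t) * ρe^j) * (K₂ * (((j:ℝ)+1)/r) ^ (d/2))) :=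
            (ENNReal.ofReal_mul (by positivity)).symm
      _ ≤ ENNReal.ofReal (c * (((j:ℝ)+1)^n * ρe^j)) := by
            apply ENNReal.ofReal_le_ofReal
            have hj1 : (1:ℝ) ≤ (j:ℝ)+1 := by
              have : (0:ℝ) ≤ (j:ℝ) := Nat.cast_nonneg j
              linarith
            have hdiv : (((j:ℝ)+1)/r) ^ (d/2) = ((j:ℝ)+1)^(d/2) / r^(d/2) :=
              Real.div_rpow (by linarith) hrpos.le _
            have hexp : ((j:ℝ)+1)^(d/2) ≤ ((j:ℝ)+1)^n := by
              rw [← Real.rpow_natCast ((j:ℝ)+1) n]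
              exact Real.rpow_le_rpow_of_exponent_le hj1 hdn
            rw [hdiv, hcdef]
            rw [show Real.exp (r-t) * ρe^j * (K₂ * (((j:ℝ)+1)^(d/2) / r^(d/2)))
              = (Real.exp (r-t) * K₂ / r^(d/2) * ρe^j) * ((j:ℝ)+1)^(d/2) by ring]
            rw [show Real.exp (r-t) * K₂ / r^(d/2) * (((j:ℝ)+1)^n * ρe^j)
              = (Real.exp (r-t) * K₂ / r^(d/2) * ρe^j) * ((j:ℝ)+1)^n by ring]
            exact mul_le_mul_of_nonneg_left hexp (by positivity)
    calc ∫⁻ ω in Metric.sphere (0 : EuclideanSpace ℝ (Fin n)) 1,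
        ENNReal.ofReal (Real.exp ((inner ℝ x ω : ℝ) - t)) ∂μH[d]
        = ∫⁻ ω in ⋃ j : ℕ, (Metric.sphere (0 : EuclideanSpace ℝ (Fin n)) 1 ∩ A j),
            ENNReal.ofReal (Real.exp ((inner ℝ x ω : ℝ) - t)) ∂μH[d] := by rw [← hcover]
    _ ≤ ∑' j : ℕ, ∫⁻ ω in Metric.sphere (0 : EuclideanSpace ℝ (Fin n)) 1 ∩ A j,
            ENNReal.ofReal (Real.exp ((inner ℝ x ω : ℝ) - t)) ∂μH[d] :=
          lintegral_iUnion_le _ _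
    _ ≤ ∑' j : ℕ, ENNReal.ofReal (c * (((j:ℝ)+1)^n * ρe^j)) :=
          ENNReal.tsum_le_tsum hband
    _ = ENNReal.ofReal (∑' j : ℕ, c * (((j:ℝ)+1)^n * ρe^j)) :=
          (ENNReal.ofReal_tsum_of_nonneg (fun j => by positivity) (hsum.mul_left c)).symm
    _ = ENNReal.ofReal (c * C₃) := by rw [_root_.tsum_mul_left]
    _ ≤ ENNReal.ofReal (Creal * (1+r)^(-(d/2)) * Real.exp (r - t)) := by
          apply ENNReal.ofReal_le_ofReal
          have hXY : (1+r)^(d/2) ≤ 2^(d/2) * r^(d/2) := by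
            rw [← Real.mul_rpow (by norm_num) hrpos.le]
            exact Real.rpow_le_rpow h1r.le (by linarith) hhalf
          have hKC : K₂ * C₃ * (1+r)^(d/2) ≤ Creal * r^(d/2) := by
            have h1 : K₂ * C₃ * (1+r)^(d/2) ≤ K₂ * C₃ * (2^(d/2) * r^(d/2)) :=
              mul_le_mul_of_nonneg_left hXY (mul_nonneg hK₂.le hC₃0)
            have h2 : K₂ * C₃ * 2^(d/2) ≤ Creal := by
              rw [hCrealdef]; nlinarith [mul_pos hT h2pos]
            nlinarith [mul_le_mul_of_nonneg_right h2 hYpos.le]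
          have step : K₂ * C₃ / r^(d/2) ≤ Creal * (1+r)^(-(d/2)) := by
            rw [Real.rpow_neg h1r.le, mul_comm Creal, ← div_eq_inv_mul,
              div_le_div_iff₀ hYpos hXpos]
            linarith [hKC]
          rw [hcdef]
          calc Real.exp (r-t) * K₂ / r^(d/2) * C₃
              = (K₂ * C₃ / r^(d/2)) * Real.exp (r-t) := by ring
          _ ≤ (Creal * (1+r)^(-(d/2))) * Real.exp (r-t) :=
              mul_le_mul_of_nonneg_right step (Real.exp_pos _).le
          _ = Creal * (1+r)^(-(d/2)) * Real.exp (r-t) := by ring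

theorem stmt1 (n : ℕ) (hn : 2 ≤ n) :
    ∃ c C : ℝ, 0 < c ∧ c ≤ C ∧
      ∀ (t : ℝ) (x : EuclideanSpace ℝ (Fin n)),
        c * (1 + ‖x‖) ^ (-((n : ℝ) - 1) / 2) * Real.exp (‖x‖ - t) ≤ phiFn n t x ∧
        phiFn n t x ≤ C * (1 + ‖x‖) ^ (-((n : ℝ) - 1) / 2) * Real.exp (‖x‖ - t) := by
  obtain ⟨c, hc, hlow⟩ := lowerB n hn
  obtain ⟨C, hC, hup⟩ := upperB n hn
  refine ⟨c, max C c, hc, le_max_right _ _, fun t x => ⟨hlow t x, le_trans (hup t x) ?_⟩⟩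
  have hA : 0 ≤ (1 + ‖x‖) ^ (-((n:ℝ)-1)/2) := Real.rpow_nonneg (by positivity) _
  exact mul_le_mul_of_nonneg_right
    (mul_le_mul_of_nonneg_right (le_max_left C c) hA) (Real.exp_pos _).le
end

section
/- For r ≥ 1 and n ≥ 2, the integral ∫_0^{π/2} e^{r(cos θ − 1)} r^{(n-1)/2} (sin θ)^{n-2} dθ is bounded above by (π/2)^{n-1} ∫_0^∞ e^{−θ²/2} θ^{n-2} dθ and bounded below by (2/π)^{n-2} ∫_0^{π√r/2} e^{−θ²/2} θ^{n-2} dθ. -/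
open Real MeasureTheory

lemma gauss_subst (m : ℕ) (c b : ℝ) :
    ∫ θ in (0:ℝ)..b, Real.exp (-(θ*c)^2/2) * (θ*c)^m * c
      = ∫ u in (0:ℝ)..(b*c), Real.exp (-u^2/2) * u^m := by
  have h := intervalIntegral.smul_integral_comp_mul_right (a := 0) (b := b)
    (fun u => Real.exp (-u^2/2) * u^m) c
  simp only [zero_mul, smul_eq_mul] at h
  rw [← h, ← intervalIntegral.integral_const_mul]
  congr 1; ext θ; ring

lemma gauss_integrable (m : ℕ) :
    IntegrableOn (fun u : ℝ => Real.exp (-u^2/2) * u^m) (Set.Ioi 0) := by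
  have h := integrableOn_rpow_mul_exp_neg_mul_sq (b := (1/2:ℝ)) (by norm_num)
    (s := (m:ℝ)) (by exact lt_of_lt_of_le (by norm_num) (Nat.cast_nonneg m))
  refine h.congr_fun (fun x hx => ?_) measurableSet_Ioi
  simp only [Real.rpow_natCast]
  ring_nf

theorem stmt3 (n : ℕ) (hn : 2 ≤ n) (r : ℝ) (hr : 1 ≤ r) :
    (∫ θ in (0:ℝ)..(π/2),
        Real.exp (r * (Real.cos θ - 1)) * r ^ (((n : ℝ) - 1) / 2) * Real.sin θ ^ (n - 2))
      ≤ (π / 2) ^ (n - 1) * ∫ θ in Set.Ioi (0:ℝ), Real.exp (-θ ^ 2 / 2) * θ ^ (n - 2) ∧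
    (2 / π) ^ (n - 2) *
        (∫ θ in (0:ℝ)..(π * Real.sqrt r / 2), Real.exp (-θ ^ 2 / 2) * θ ^ (n - 2))
      ≤ ∫ θ in (0:ℝ)..(π/2),
          Real.exp (r * (Real.cos θ - 1)) * r ^ (((n : ℝ) - 1) / 2) * Real.sin θ ^ (n - 2) := by
  obtain ⟨m, rfl⟩ : ∃ m, n = m + 2 := ⟨n - 2, (Nat.sub_add_cancel hn).symm⟩
  have hr0 : (0:ℝ) < r := by linarith
  set s := Real.sqrt r with hs
  have hs0 : 0 < s := Real.sqrt_pos.mpr hr0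
  have hs2 : s ^ 2 = r := Real.sq_sqrt hr0.le
  have hm2 : m + 2 - 2 = m := by omega
  have hm1 : m + 2 - 1 = m + 1 := by omega
  have hrpow' : r ^ ((((m + 2 : ℕ) : ℝ) - 1) / 2) = s ^ (m + 1) := by
    have : (((m + 2 : ℕ) : ℝ) - 1) / 2 = ((m + 1 : ℕ) : ℝ) * (1/2) := by push_cast; ring
    rw [this, mul_comm, Real.rpow_mul hr0.le, ← Real.sqrt_eq_rpow, Real.rpow_natCast]
  rw [hm2, hm1, hrpow']
  have hpi := Real.pi_pos
  constructor
  · -- upper bound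
    set c := 2 * s / π with hc
    have hc0 : 0 < c := by positivity
    have step1 : (∫ θ in (0:ℝ)..(π/2),
          Real.exp (r * (Real.cos θ - 1)) * s ^ (m+1) * Real.sin θ ^ m)
        ≤ ∫ θ in (0:ℝ)..(π/2),
          Real.exp (-(θ*c)^2/2) * (θ*c)^m * c * (π/2)^(m+1) := by
      apply intervalIntegral.integral_mono_on (by positivity)
      · apply Continuous.intervalIntegrable; continuity
      · apply Continuous.intervalIntegrable; continuity
      · intro θ hθ
        obtain ⟨hθ0, hθ1⟩ := hθ
        have hcos : Real.cos θ ≤ 1 - 2 / π^2 * θ^2 := by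
          apply Real.cos_le_one_sub_mul_cos_sq
          rw [abs_of_nonneg hθ0]; linarith
        have hexp : Real.exp (r * (Real.cos θ - 1)) ≤ Real.exp (-(θ*c)^2/2) := by
          apply Real.exp_le_exp.mpr
          have h2 : -(θ*c)^2/2 = -(2 * r * θ^2 / π^2) := by
            rw [hc]; field_simp; rw [← hs2]
          rw [h2]
          have h3 : r * (cos θ - 1) ≤ r * (-(2 / π^2 * θ^2)) := by
            apply mul_le_mul_of_nonneg_left (by linarith) hr0.le
          calc r * (cos θ - 1) ≤ r * (-(2 / π^2 * θ^2)) := h3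
            _ = -(2 * r * θ^2 / π^2) := by ring
        have hsin : Real.sin θ ^ m ≤ θ ^ m :=
          pow_le_pow_left₀ (Real.sin_nonneg_of_nonneg_of_le_pi hθ0 (by linarith))
            (Real.sin_le hθ0) m
        have hsin0 : 0 ≤ Real.sin θ := Real.sin_nonneg_of_nonneg_of_le_pi hθ0 (by linarith)
        have hcs : c * (π/2) = s := by rw [hc]; field_simp
        calc Real.exp (r * (Real.cos θ - 1)) * s ^ (m+1) * Real.sin θ ^ m
            ≤ Real.exp (-(θ*c)^2/2) * s ^ (m+1) * θ ^ m := by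
              apply mul_le_mul (mul_le_mul hexp le_rfl (by positivity) (by positivity)) hsin
                (pow_nonneg hsin0 m) (by positivity)
          _ = Real.exp (-(θ*c)^2/2) * (θ^m * (c*(π/2))^(m+1)) := by rw [hcs]; ring
          _ = Real.exp (-(θ*c)^2/2) * (θ*c)^m * c * (π/2)^(m+1) := by
              rw [mul_pow c, mul_pow θ c]; ring
    have step2 : (∫ θ in (0:ℝ)..(π/2),
          Real.exp (-(θ*c)^2/2) * (θ*c)^m * c * (π/2)^(m+1))
        = (π/2)^(m+1) * ∫ u in (0:ℝ)..s, Real.exp (-u^2/2) * u^m := by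
      rw [intervalIntegral.integral_mul_const, gauss_subst]
      rw [show π/2*c = s by rw [hc]; field_simp]
      ring
    have step3 : (∫ u in (0:ℝ)..s, Real.exp (-u^2/2) * u^m)
        ≤ ∫ u in Set.Ioi (0:ℝ), Real.exp (-u^2/2) * u^m := by
      rw [intervalIntegral.integral_of_le hs0.le]
      apply setIntegral_mono_set (gauss_integrable m)
      · filter_upwards [ae_restrict_mem measurableSet_Ioi] with x hx
        have : (0:ℝ) < x := hx
        positivity
      · exact (Set.Ioc_subset_Ioi_self).eventuallyLE
    calc _ ≤ (π/2)^(m+1) * ∫ u in (0:ℝ)..s, Real.exp (-u^2/2) * u^m := by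
            rw [← step2]; exact step1
      _ ≤ (π/2)^(m+1) * ∫ u in Set.Ioi (0:ℝ), Real.exp (-u^2/2) * u^m := by
            apply mul_le_mul_of_nonneg_left step3 (by positivity)
  · -- lower bound
    have step1 : (∫ θ in (0:ℝ)..(π/2),
          Real.exp (-(θ*s)^2/2) * (θ*s)^m * s * (2/π)^m)
        ≤ ∫ θ in (0:ℝ)..(π/2),
          Real.exp (r * (Real.cos θ - 1)) * s ^ (m+1) * Real.sin θ ^ m := by
      apply intervalIntegral.integral_mono_on (by positivity)
      · apply Continuous.intervalIntegrable; continuity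
      · apply Continuous.intervalIntegrable; continuity
      · intro θ hθ
        obtain ⟨hθ0, hθ1⟩ := hθ
        have hexp : Real.exp (-(θ*s)^2/2) ≤ Real.exp (r * (Real.cos θ - 1)) := by
          apply Real.exp_le_exp.mpr
          have h1 : 1 - θ^2/2 ≤ Real.cos θ := Real.one_sub_sq_div_two_le_cos
          have : (θ*s)^2 = r * θ^2 := by rw [mul_pow, hs2]; ring
          rw [this]
          nlinarith
        have hsin : (2/π * θ) ^ m ≤ Real.sin θ ^ m :=
          pow_le_pow_left₀ (by positivity) (Real.mul_le_sin hθ0 hθ1) m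
        calc Real.exp (-(θ*s)^2/2) * (θ*s)^m * s * (2/π)^m
            = Real.exp (-(θ*s)^2/2) * s^(m+1) * (2/π * θ)^m := by
              rw [mul_pow, mul_pow]; ring
          _ ≤ Real.exp (r * (Real.cos θ - 1)) * s^(m+1) * Real.sin θ ^ m := by
              apply mul_le_mul (mul_le_mul hexp le_rfl (by positivity) (by positivity)) hsin
                (by positivity) (by positivity)
    have step2 : (∫ θ in (0:ℝ)..(π/2),
          Real.exp (-(θ*s)^2/2) * (θ*s)^m * s * (2/π)^m)
        = (2/π)^m * ∫ u in (0:ℝ)..(π * s / 2), Real.exp (-u^2/2) * u^m := by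
      rw [intervalIntegral.integral_mul_const, gauss_subst]
      rw [show π/2*s = π*s/2 by ring]
      ring
    rw [← step2]
    exact step1
end
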